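/- Let a, b, c be real numbers satisfying 0 < b < c and 0 < a < c − b, and let Bop be a bounded linear operator on ℓ² representing B(a,b,c). Then the operator norm of Bop equals Γ(b)Γ(c−a)/Γ(b+c−a). -/

import Mathlib

/-- The sequence space `ℓ²(ℤ≥0, ℂ)`. -/
noncomputable abbrev l2 : Type := lp (fun _ : ℕ => ℂ) 2

/-- The entries of the weighted Hankel matrix `B(a,b,c)`. -/
noncomputable def Bent (a b c : ℝ) (j k : ℕ) : ℝ :=
  (Real.Gamma ((j : ℝ) + k + a) / Real.Gamma ((j : ℝ) + k + b + c)) *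
    Real.sqrt (Real.Gamma ((j : ℝ) + b) * Real.Gamma ((j : ℝ) + c) *
        Real.Gamma ((k : ℝ) + b) * Real.Gamma ((k : ℝ) + c) /
      (Real.Gamma ((j : ℝ) + a) * (Nat.factorial j) *
        Real.Gamma ((k : ℝ) + a) * (Nat.factorial k)))

/-- A bounded operator on `ℓ²` represents the matrix `B(a,b,c)` if its matrix elements
with respect to the standard orthonormal basis are the entries of `B(a,b,c)`. -/
def Represents (a b c : ℝ) (Bop : l2 →L[ℂ] l2) : Prop :=
  ∀ j k : ℕ,
    (inner ℂ (lp.single 2 j (1 : ℂ)) (Bop (lp.single 2 k (1 : ℂ))) : ℂ) = (Bent a b c j k : ℂ)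

open MeasureTheory Real Set
open scoped ENNReal NNReal

lemma hasSum_of_ennreal {f : ℕ → ℝ} {L : ℝ} (hf : ∀ k, 0 ≤ f k) (hL : 0 ≤ L)
    (h : ∑' k, ENNReal.ofReal (f k) = ENNReal.ofReal L) : HasSum f L := by
  have hne : ∑' k, ENNReal.ofReal (f k) ≠ ⊤ := by simp [h]
  have hsum : Summable f := by
    have := ENNReal.summable_toReal hne
    refine this.congr fun k => ?_
    rw [ENNReal.toReal_ofReal (hf k)]
  have : ENNReal.ofReal (∑' k, f k) = ENNReal.ofReal L := by
    rw [ENNReal.ofReal_tsum_of_nonneg hf hsum, h]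
  have := (ENNReal.ofReal_eq_ofReal_iff (tsum_nonneg (fun k => hf k)) hL).mp this
  exact this ▸ hsum.hasSum

lemma rbeta_integrable {u v : ℝ} (hu : 0 < u) (hv : 0 < v) :
    IntegrableOn (fun t : ℝ => t ^ (u-1) * (1-t) ^ (v-1)) (Ioo (0:ℝ) 1) := by
  have hC := Complex.betaIntegral_convergent (u := (u:ℂ)) (v := (v:ℂ))
      (by simpa using hu) (by simpa using hv)
  have hC' : IntegrableOn (fun x : ℝ => (x:ℂ) ^ ((u:ℂ)-1) * (1 - (x:ℂ)) ^ ((v:ℂ)-1))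
      (Ioo (0:ℝ) 1) := by
    have := (intervalIntegrable_iff_integrableOn_Ioc_of_le (by norm_num : (0:ℝ) ≤ 1)).mp hC
    exact this.mono_set Ioo_subset_Ioc_self
  refine (hC'.re).congr ?_
  filter_upwards [ae_restrict_mem measurableSet_Ioo] with t ht
  have h1 : (0:ℝ) ≤ t := le_of_lt ht.1
  have h2 : (0:ℝ) ≤ 1 - t := by linarith [ht.2]
  have : ((t ^ (u - 1) * (1 - t) ^ (v - 1) : ℝ) : ℂ)
      = ((t:ℂ) ^ ((u:ℂ)-1)) * ((1 - (t:ℂ)) ^ ((v:ℂ)-1)) := by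
    rw [Complex.ofReal_mul, Complex.ofReal_cpow h1, Complex.ofReal_cpow h2]
    norm_cast
  simp [← this, Complex.ofReal_re]

lemma rbeta {u v : ℝ} (hu : 0 < u) (hv : 0 < v) :
    ∫ t in Ioo (0:ℝ) 1, t ^ (u-1) * (1-t) ^ (v-1) =
      Real.Gamma u * Real.Gamma v / Real.Gamma (u+v) := by
  have h := Complex.Gamma_mul_Gamma_eq_betaIntegral
      (s := (u:ℂ)) (t := (v:ℂ)) (by simpa using hu) (by simpa using hv)
  have hbeta : Complex.betaIntegral (u:ℂ) (v:ℂ)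
      = ((∫ t in Ioo (0:ℝ) 1, t ^ (u-1) * (1-t) ^ (v-1) : ℝ) : ℂ) := by
    rw [Complex.betaIntegral, intervalIntegral.integral_of_le zero_le_one,
      ← MeasureTheory.integral_Ioc_eq_integral_Ioo]
    refine (setIntegral_congr_fun measurableSet_Ioc (fun t ht => ?_)).trans
      (integral_ofReal (f := fun t : ℝ => t ^ (u-1) * (1-t) ^ (v-1)))
    have h1 : (0:ℝ) ≤ t := le_of_lt ht.1
    have h2 : (0:ℝ) ≤ 1 - t := by linarith [ht.2]
    have : ((t ^ (u - 1) * (1 - t) ^ (v - 1) : ℝ) : ℂ)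
        = ((t:ℂ) ^ ((u:ℂ)-1)) * ((1 - (t:ℂ)) ^ ((v:ℂ)-1)) := by
      rw [Complex.ofReal_mul, Complex.ofReal_cpow h1, Complex.ofReal_cpow h2]
      norm_cast
    exact this.symm
  rw [hbeta, ← Complex.ofReal_add, Complex.Gamma_ofReal, Complex.Gamma_ofReal,
    Complex.Gamma_ofReal, ← Complex.ofReal_mul, ← Complex.ofReal_mul] at h
  have h' := Complex.ofReal_inj.mp h
  have hne : Real.Gamma (u+v) ≠ 0 := (Real.Gamma_pos_of_pos (by linarith)).ne'
  field_simp [hne] at h' ⊢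
  linarith [h']

lemma rbetaL {u v : ℝ} (hu : 0 < u) (hv : 0 < v) :
    ∫⁻ t in Ioo (0:ℝ) 1, ENNReal.ofReal (t ^ (u-1) * (1-t) ^ (v-1)) =
      ENNReal.ofReal (Real.Gamma u * Real.Gamma v / Real.Gamma (u+v)) := by
  rw [← rbeta hu hv, ← ofReal_integral_eq_lintegral_ofReal (rbeta_integrable hu hv)]
  filter_upwards [ae_restrict_mem measurableSet_Ioo] with t ht
  have h1 : (0:ℝ) < t := ht.1
  have h2 : (0:ℝ) ≤ 1 - t := by linarith [ht.2]
  positivity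

lemma rgammaL {β r : ℝ} (hβ : 0 < β) (hr : 0 < r) :
    ∫⁻ s in Ioi (0:ℝ), ENNReal.ofReal (s ^ (β-1) * Real.exp (-(r*s))) =
      ENNReal.ofReal ((1/r) ^ β * Real.Gamma β) := by
  have hint : IntegrableOn (fun s : ℝ => s ^ (β-1) * Real.exp (-(r*s))) (Ioi (0:ℝ)) := by
    have := integrableOn_rpow_mul_exp_neg_mul_rpow (p := 1) (s := β-1) (b := r)
      (by linarith) zero_lt_one hr
    refine this.congr_fun (fun s hs => ?_) measurableSet_Ioi
    beta_reduce
    rw [Real.rpow_one, neg_mul]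
  rw [← Real.integral_rpow_mul_exp_neg_mul_Ioi hβ hr,
    ← ofReal_integral_eq_lintegral_ofReal hint]
  filter_upwards [ae_restrict_mem measurableSet_Ioi] with s hs
  have : (0:ℝ) < s := hs
  positivity

lemma binomial_hasSum {β t : ℝ} (hβ : 0 < β) (ht0 : 0 ≤ t) (ht1 : t < 1) :
    HasSum (fun k : ℕ => Real.Gamma ((k:ℝ)+β) / (Nat.factorial k) * t^k)
      (Real.Gamma β * (1-t) ^ (-β)) := by
  set f : ℕ → ℝ := fun k => Real.Gamma ((k:ℝ)+β) / (Nat.factorial k) * t^k with hfdef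
  have hf : ∀ k, 0 ≤ f k := by
    intro k
    have : (0:ℝ) < (k:ℝ)+β := by positivity
    have := Real.Gamma_pos_of_pos this
    have hk : (0:ℝ) < (Nat.factorial k : ℝ) := by positivity
    positivity
  have h1t : (0:ℝ) < 1 - t := by linarith
  apply hasSum_of_ennreal hf (by positivity)
  have hterm : ∀ k : ℕ, ENNReal.ofReal (f k)
      = ∫⁻ s in Ioi (0:ℝ), ENNReal.ofReal
          (Real.exp (-s) * s ^ ((k:ℝ)+β-1) * (t^k / (Nat.factorial k))) := by
    intro k
    have hkβ : (0:ℝ) < (k:ℝ)+β := by positivity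
    have hint := Real.GammaIntegral_convergent hkβ
    have h1 : f k = ∫ s in Ioi (0:ℝ),
        Real.exp (-s) * s ^ ((k:ℝ)+β-1) * (t^k / (Nat.factorial k)) := by
      rw [MeasureTheory.integral_mul_const, ← Real.Gamma_eq_integral hkβ]
      simp only [hfdef]
      field_simp
    rw [h1, ← ofReal_integral_eq_lintegral_ofReal (hint.mul_const _) ?_]
    filter_upwards [ae_restrict_mem measurableSet_Ioi] with s hs
    have : (0:ℝ) < s := hs
    positivity
  calc ∑' k, ENNReal.ofReal (f k)
      = ∑' (k : ℕ), ∫⁻ s in Ioi (0:ℝ), ENNReal.ofReal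
          (Real.exp (-s) * s ^ ((k:ℝ)+β-1) * (t^k / (Nat.factorial k))) :=
        tsum_congr hterm
    _ = ∫⁻ s in Ioi (0:ℝ), ∑' (k : ℕ), ENNReal.ofReal
          (Real.exp (-s) * s ^ ((k:ℝ)+β-1) * (t^k / (Nat.factorial k))) := by
        refine (lintegral_tsum fun k => ?_).symm
        fun_prop
    _ = ∫⁻ s in Ioi (0:ℝ), ENNReal.ofReal (s ^ (β-1) * Real.exp (-((1-t)*s))) := by
        refine setLIntegral_congr_fun measurableSet_Ioi ?_
        intro s hs
        beta_reduce
        have hs0 : (0:ℝ) < s := hs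
        have hkey : ∀ k : ℕ, Real.exp (-s) * s ^ ((k:ℝ)+β-1) * (t^k / (Nat.factorial k))
            = (Real.exp (-s) * s ^ (β-1)) * ((t*s)^k / (Nat.factorial k)) := by
          intro k
          have : s ^ ((k:ℝ)+β-1) = s ^ (β-1) * s ^ k := by
            rw [show (k:ℝ)+β-1 = (β-1) + (k:ℝ) by ring, Real.rpow_add hs0,
              Real.rpow_natCast]
          rw [this, mul_pow]
          ring
        have hexp : HasSum (fun k : ℕ => (t*s)^k / (Nat.factorial k)) (Real.exp (t*s)) := by
          rw [Real.exp_eq_exp_ℝ]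
          exact NormedSpace.expSeries_div_hasSum_exp (t*s)
        have hnn : ∀ k : ℕ, 0 ≤ (t*s)^k / (Nat.factorial k) := by
          intro k
          have hk : (0:ℝ) < (Nat.factorial k : ℝ) := by positivity
          have : (0:ℝ) ≤ t*s := by positivity
          positivity
        calc ∑' (k : ℕ), ENNReal.ofReal
              (Real.exp (-s) * s ^ ((k:ℝ)+β-1) * (t^k / (Nat.factorial k)))
            = ∑' (k : ℕ), ENNReal.ofReal (Real.exp (-s) * s ^ (β-1))
                * ENNReal.ofReal ((t*s)^k / (Nat.factorial k)) := by
              refine tsum_congr fun k => ?_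
              rw [hkey k, ENNReal.ofReal_mul (by positivity)]
          _ = ENNReal.ofReal (Real.exp (-s) * s ^ (β-1)) * ENNReal.ofReal (Real.exp (t*s)) := by
              rw [ENNReal.tsum_mul_left, ← ENNReal.ofReal_tsum_of_nonneg hnn hexp.summable,
                hexp.tsum_eq]
          _ = ENNReal.ofReal (s ^ (β-1) * Real.exp (-((1-t)*s))) := by
              rw [← ENNReal.ofReal_mul (by positivity)]
              congr 1
              rw [show -((1-t)*s) = t*s + -s by ring, Real.exp_add]
              ring
    _ = ENNReal.ofReal ((1/(1-t)) ^ β * Real.Gamma β) := rgammaL hβ h1t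
    _ = ENNReal.ofReal (Real.Gamma β * (1-t) ^ (-β)) := by
        congr 1
        rw [one_div, Real.inv_rpow h1t.le, ← Real.rpow_neg h1t.le]
        ring

lemma gauss_hasSum {x β y : ℝ} (hx : 0 < x) (hβ : 0 < β) (hxy : x + β < y) :
    HasSum (fun k : ℕ => Real.Gamma ((k:ℝ)+x) * Real.Gamma ((k:ℝ)+β) /
        (Real.Gamma ((k:ℝ)+y) * (Nat.factorial k)))
      (Real.Gamma x * Real.Gamma β * Real.Gamma (y-x-β) /
        (Real.Gamma (y-x) * Real.Gamma (y-β))) := by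
  have hyx : (0:ℝ) < y - x := by linarith
  have hyxβ : (0:ℝ) < y - x - β := by linarith
  have hyβ : (0:ℝ) < y - β := by linarith
  have hy : (0:ℝ) < y := by linarith
  set f : ℕ → ℝ := fun k => Real.Gamma ((k:ℝ)+x) * Real.Gamma ((k:ℝ)+β) /
      (Real.Gamma ((k:ℝ)+y) * (Nat.factorial k)) with hfdef
  set L : ℝ := Real.Gamma x * Real.Gamma β * Real.Gamma (y-x-β) /
      (Real.Gamma (y-x) * Real.Gamma (y-β)) with hLdef
  have hgam : ∀ z : ℝ, 0 < z → 0 < Real.Gamma z := fun z hz => Real.Gamma_pos_of_pos hz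
  have hf : ∀ k, 0 ≤ f k := by
    intro k
    have h1 : (0:ℝ) < (k:ℝ)+x := by positivity
    have h2 : (0:ℝ) < (k:ℝ)+β := by positivity
    have h3 : (0:ℝ) < (k:ℝ)+y := by positivity
    have hk : (0:ℝ) < (Nat.factorial k : ℝ) := by positivity
    have := hgam _ h1; have := hgam _ h2; have := hgam _ h3
    positivity
  have hL : 0 ≤ L := by
    have := hgam _ hx; have := hgam _ hβ; have := hgam _ hyxβ
    have := hgam _ hyx; have := hgam _ hyβ
    positivity
  -- it suffices to prove the scaled version
  have key : HasSum (fun k => Real.Gamma (y-x) * f k) (Real.Gamma (y-x) * L) := by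
    apply hasSum_of_ennreal (fun k => mul_nonneg (hgam _ hyx).le (hf k))
      (mul_nonneg (hgam _ hyx).le hL)
    have hterm : ∀ k : ℕ, ENNReal.ofReal (Real.Gamma (y-x) * f k)
        = ∫⁻ t in Ioo (0:ℝ) 1, ENNReal.ofReal
            (t ^ (x-1) * (1-t) ^ (y-x-1) * (Real.Gamma ((k:ℝ)+β) / (Nat.factorial k) * t^k)) := by
      intro k
      have hkx : (0:ℝ) < (k:ℝ)+x := by positivity
      have hpt : ∀ t ∈ Ioo (0:ℝ) 1,
          t ^ (x-1) * (1-t) ^ (y-x-1) * (Real.Gamma ((k:ℝ)+β) / (Nat.factorial k) * t^k)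
          = (Real.Gamma ((k:ℝ)+β) / (Nat.factorial k))
              * (t ^ ((k:ℝ)+x-1) * (1-t) ^ ((y-x)-1)) := by
        intro t ht
        have : t ^ ((k:ℝ)+x-1) = t ^ (x-1) * t ^ k := by
          rw [show (k:ℝ)+x-1 = (x-1) + (k:ℝ) by ring, Real.rpow_add ht.1, Real.rpow_natCast]
        rw [this]
        ring_nf
      symm
      calc ∫⁻ t in Ioo (0:ℝ) 1, ENNReal.ofReal
            (t ^ (x-1) * (1-t) ^ (y-x-1) * (Real.Gamma ((k:ℝ)+β) / (Nat.factorial k) * t^k))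
          = ∫⁻ t in Ioo (0:ℝ) 1, ENNReal.ofReal (Real.Gamma ((k:ℝ)+β) / (Nat.factorial k))
              * ENNReal.ofReal (t ^ ((k:ℝ)+x-1) * (1-t) ^ ((y-x)-1)) := by
            refine setLIntegral_congr_fun measurableSet_Ioo ?_
            intro t ht
            beta_reduce
            rw [hpt t ht, ENNReal.ofReal_mul (by positivity)]
        _ = ENNReal.ofReal (Real.Gamma ((k:ℝ)+β) / (Nat.factorial k))
              * ENNReal.ofReal (Real.Gamma ((k:ℝ)+x) * Real.Gamma (y-x) / Real.Gamma ((k:ℝ)+x+(y-x))) := by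
            rw [lintegral_const_mul _ (by fun_prop), rbetaL hkx hyx]
        _ = ENNReal.ofReal (Real.Gamma (y-x) * f k) := by
            rw [← ENNReal.ofReal_mul (by positivity)]
            congr 1
            have hkxy : (k:ℝ)+x+(y-x) = (k:ℝ)+y := by ring
            rw [hkxy, hfdef]
            have h3 := hgam _ (show (0:ℝ) < (k:ℝ)+y by positivity)
            have hk : (0:ℝ) < (Nat.factorial k : ℝ) := by positivity
            field_simp
    calc ∑' (k : ℕ), ENNReal.ofReal (Real.Gamma (y-x) * f k)
        = ∑' (k : ℕ), ∫⁻ t in Ioo (0:ℝ) 1, ENNReal.ofReal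
            (t ^ (x-1) * (1-t) ^ (y-x-1) * (Real.Gamma ((k:ℝ)+β) / (Nat.factorial k) * t^k)) :=
          tsum_congr hterm
      _ = ∫⁻ t in Ioo (0:ℝ) 1, ∑' (k : ℕ), ENNReal.ofReal
            (t ^ (x-1) * (1-t) ^ (y-x-1) * (Real.Gamma ((k:ℝ)+β) / (Nat.factorial k) * t^k)) := by
          refine (lintegral_tsum fun k => ?_).symm
          fun_prop
      _ = ∫⁻ t in Ioo (0:ℝ) 1, ENNReal.ofReal (Real.Gamma β * (t ^ (x-1) * (1-t) ^ ((y-x-β)-1))) := by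
          refine setLIntegral_congr_fun measurableSet_Ioo ?_
          intro t ht
          beta_reduce
          have ht0 : (0:ℝ) < t := ht.1
          have ht1 : (0:ℝ) < 1 - t := by linarith [ht.2]
          have hbin := binomial_hasSum hβ ht0.le (by linarith [ht.2] : t < 1)
          have hnn : ∀ k : ℕ, 0 ≤ Real.Gamma ((k:ℝ)+β) / (Nat.factorial k) * t^k := by
            intro k
            have := hgam _ (show (0:ℝ) < (k:ℝ)+β by positivity)
            have hk : (0:ℝ) < (Nat.factorial k : ℝ) := by positivity
            positivity
          calc ∑' (k : ℕ), ENNReal.ofReal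
                (t ^ (x-1) * (1-t) ^ (y-x-1) * (Real.Gamma ((k:ℝ)+β) / (Nat.factorial k) * t^k))
              = ∑' (k : ℕ), ENNReal.ofReal (t ^ (x-1) * (1-t) ^ (y-x-1))
                  * ENNReal.ofReal (Real.Gamma ((k:ℝ)+β) / (Nat.factorial k) * t^k) := by
                refine tsum_congr fun k => ?_
                rw [ENNReal.ofReal_mul (by positivity)]
            _ = ENNReal.ofReal (t ^ (x-1) * (1-t) ^ (y-x-1))
                  * ENNReal.ofReal (Real.Gamma β * (1-t) ^ (-β)) := by
                rw [ENNReal.tsum_mul_left, ← ENNReal.ofReal_tsum_of_nonneg hnn hbin.summable,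
                  hbin.tsum_eq]
            _ = ENNReal.ofReal (Real.Gamma β * (t ^ (x-1) * (1-t) ^ ((y-x-β)-1))) := by
                rw [← ENNReal.ofReal_mul (by positivity)]
                congr 1
                have : (1-t) ^ ((y-x-β)-1) = (1-t) ^ (y-x-1) * (1-t) ^ (-β) := by
                  rw [← Real.rpow_add ht1]
                  ring_nf
                rw [this]
                ring
      _ = ENNReal.ofReal (Real.Gamma β)
            * ENNReal.ofReal (Real.Gamma x * Real.Gamma (y-x-β) / Real.Gamma (x+(y-x-β))) := by
          rw [← rbetaL hx hyxβ, ← lintegral_const_mul _ (by fun_prop)]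
          refine setLIntegral_congr_fun measurableSet_Ioo ?_
          intro t ht
          beta_reduce
          rw [ENNReal.ofReal_mul (hgam _ hβ).le]
      _ = ENNReal.ofReal (Real.Gamma (y-x) * L) := by
          rw [← ENNReal.ofReal_mul (hgam _ hβ).le]
          congr 1
          have hxyβ : x+(y-x-β) = y-β := by ring
          rw [hxyβ, hLdef]
          have h1 := hgam _ hx; have h2 := hgam _ hβ; have h3 := hgam _ hyxβ
          have h4 := hgam _ hyx; have h5 := hgam _ hyβ
          field_simp
  have := key.mul_left (Real.Gamma (y-x))⁻¹
  simp only [← mul_assoc, inv_mul_cancel₀ (hgam _ hyx).ne', one_mul] at this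
  exact this

lemma ennreal_cauchy_schwarz (f g : ℕ → ℝ≥0∞) :
    ∑' k, f k * g k ≤ (∑' k, f k ^ (2:ℝ)) ^ (1/2:ℝ) * (∑' k, g k ^ (2:ℝ)) ^ (1/2:ℝ) := by
  have h := ENNReal.lintegral_mul_le_Lp_mul_Lq (Measure.count (α := ℕ))
    Real.HolderConjugate.two_two
    (measurable_of_countable f).aemeasurable (measurable_of_countable g).aemeasurable
  simpa [lintegral_count] using h

/-- The eigenvector sequence. -/
noncomputable def pseq (a b c : ℝ) (j : ℕ) : ℝ :=
  Real.sqrt (Real.Gamma ((j:ℝ)+a) * Real.Gamma ((j:ℝ)+b) /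
    (Real.Gamma ((j:ℝ)+c) * (Nat.factorial j)))

/-- The value of the norm. -/
noncomputable def Cval (a b c : ℝ) : ℝ :=
  Real.Gamma b * Real.Gamma (c - a) / Real.Gamma (b + c - a)

section Operator

variable {a b c : ℝ}

lemma cast_nn (j : ℕ) : (0:ℝ) ≤ (j:ℝ) := Nat.cast_nonneg j

lemma pseq_pos (ha : 0 < a) (hb : 0 < b) (hc : 0 < c) (j : ℕ) : 0 < pseq a b c j := by
  have h0 := cast_nn j
  have h1 := Real.Gamma_pos_of_pos (show (0:ℝ) < (j:ℝ)+a by linarith)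
  have h2 := Real.Gamma_pos_of_pos (show (0:ℝ) < (j:ℝ)+b by linarith)
  have h3 := Real.Gamma_pos_of_pos (show (0:ℝ) < (j:ℝ)+c by linarith)
  have h4 : (0:ℝ) < (Nat.factorial j : ℝ) := by positivity
  apply Real.sqrt_pos.mpr
  positivity

lemma Bent_pos (ha : 0 < a) (hb : 0 < b) (hc : 0 < c) (j k : ℕ) : 0 < Bent a b c j k := by
  have h0 := cast_nn j; have h0' := cast_nn k
  have h1 := Real.Gamma_pos_of_pos (show (0:ℝ) < (j:ℝ)+(k:ℝ)+a by linarith)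
  have h2 := Real.Gamma_pos_of_pos (show (0:ℝ) < (j:ℝ)+(k:ℝ)+b+c by linarith)
  have h3 := Real.Gamma_pos_of_pos (show (0:ℝ) < (j:ℝ)+b by linarith)
  have h4 := Real.Gamma_pos_of_pos (show (0:ℝ) < (j:ℝ)+c by linarith)
  have h5 := Real.Gamma_pos_of_pos (show (0:ℝ) < (k:ℝ)+b by linarith)
  have h6 := Real.Gamma_pos_of_pos (show (0:ℝ) < (k:ℝ)+c by linarith)
  have h7 := Real.Gamma_pos_of_pos (show (0:ℝ) < (j:ℝ)+a by linarith)
  have h8 := Real.Gamma_pos_of_pos (show (0:ℝ) < (k:ℝ)+a by linarith)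
  have h9 : (0:ℝ) < (Nat.factorial j : ℝ) := by positivity
  have h10 : (0:ℝ) < (Nat.factorial k : ℝ) := by positivity
  unfold Bent
  push_cast at *
  positivity

lemma Bent_symm (j k : ℕ) : Bent a b c j k = Bent a b c k j := by
  unfold Bent
  rw [show (j:ℝ)+(k:ℝ)+a = (k:ℝ)+(j:ℝ)+a by ring,
    show (j:ℝ)+(k:ℝ)+b+c = (k:ℝ)+(j:ℝ)+b+c by ring]
  congr 2
  ring

lemma Cval_pos (hb : 0 < b) (hbc : b < c) (ha : 0 < a) (hac : a < c - b) :
    0 < Cval a b c := by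
  have h1 := Real.Gamma_pos_of_pos hb
  have h2 := Real.Gamma_pos_of_pos (show (0:ℝ) < c - a by linarith)
  have h3 := Real.Gamma_pos_of_pos (show (0:ℝ) < b + c - a by linarith)
  unfold Cval
  positivity

lemma row_hasSum (hb : 0 < b) (hbc : b < c) (ha : 0 < a) (hac : a < c - b) (j : ℕ) :
    HasSum (fun k => Bent a b c j k * pseq a b c k) (Cval a b c * pseq a b c j) := by
  have h0 := cast_nn j
  have hc : 0 < c := by linarith
  have hja : (0:ℝ) < (j:ℝ)+a := by linarith
  have h := gauss_hasSum (x := (j:ℝ)+a) (β := b) (y := (j:ℝ)+b+c) hja hb (by linarith)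
  rw [show (j:ℝ)+b+c - ((j:ℝ)+a) - b = c - a by ring,
    show (j:ℝ)+b+c - ((j:ℝ)+a) = b+c-a by ring,
    show (j:ℝ)+b+c - b = (j:ℝ)+c by ring] at h
  set w : ℝ := Real.sqrt (Real.Gamma ((j:ℝ)+b) * Real.Gamma ((j:ℝ)+c) /
      (Real.Gamma ((j:ℝ)+a) * (Nat.factorial j))) with hwdef
  have h' := h.mul_left w
  have gjb := Real.Gamma_pos_of_pos (show (0:ℝ) < (j:ℝ)+b by linarith)
  have gjc := Real.Gamma_pos_of_pos (show (0:ℝ) < (j:ℝ)+c by linarith)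
  have gja := Real.Gamma_pos_of_pos hja
  have gfj : (0:ℝ) < (Nat.factorial j : ℝ) := by positivity
  have hUnn : (0:ℝ) ≤ Real.Gamma ((j:ℝ)+b) * Real.Gamma ((j:ℝ)+c) /
      (Real.Gamma ((j:ℝ)+a) * (Nat.factorial j)) := by positivity
  have hfun : (fun k : ℕ => w * (Real.Gamma ((k:ℝ)+((j:ℝ)+a)) * Real.Gamma ((k:ℝ)+b) /
      (Real.Gamma ((k:ℝ)+((j:ℝ)+b+c)) * (Nat.factorial k))))
      = fun k => Bent a b c j k * pseq a b c k := by
    funext k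
    have h0' := cast_nn k
    have gkb := Real.Gamma_pos_of_pos (show (0:ℝ) < (k:ℝ)+b by linarith)
    have gkc := Real.Gamma_pos_of_pos (show (0:ℝ) < (k:ℝ)+c by linarith)
    have gka := Real.Gamma_pos_of_pos (show (0:ℝ) < (k:ℝ)+a by linarith)
    have gjka := Real.Gamma_pos_of_pos (show (0:ℝ) < (j:ℝ)+(k:ℝ)+a by linarith)
    have gjkbc := Real.Gamma_pos_of_pos (show (0:ℝ) < (j:ℝ)+(k:ℝ)+b+c by linarith)
    have gfk : (0:ℝ) < (Nat.factorial k : ℝ) := by positivity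
    rw [show (k:ℝ)+((j:ℝ)+a) = (j:ℝ)+(k:ℝ)+a by ring,
      show (k:ℝ)+((j:ℝ)+b+c) = (j:ℝ)+(k:ℝ)+b+c by ring]
    have hSnn : (0:ℝ) ≤ Real.Gamma ((j:ℝ)+b) * Real.Gamma ((j:ℝ)+c) *
        Real.Gamma ((k:ℝ)+b) * Real.Gamma ((k:ℝ)+c) /
        (Real.Gamma ((j:ℝ)+a) * (Nat.factorial j) *
          Real.Gamma ((k:ℝ)+a) * (Nat.factorial k)) := by positivity
    have hST : (Real.Gamma ((j:ℝ)+b) * Real.Gamma ((j:ℝ)+c) *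
        Real.Gamma ((k:ℝ)+b) * Real.Gamma ((k:ℝ)+c) /
        (Real.Gamma ((j:ℝ)+a) * (Nat.factorial j) *
          Real.Gamma ((k:ℝ)+a) * (Nat.factorial k))) *
        (Real.Gamma ((k:ℝ)+a) * Real.Gamma ((k:ℝ)+b) /
          (Real.Gamma ((k:ℝ)+c) * (Nat.factorial k)))
        = (Real.Gamma ((j:ℝ)+b) * Real.Gamma ((j:ℝ)+c) /
            (Real.Gamma ((j:ℝ)+a) * (Nat.factorial j)))
          * (Real.Gamma ((k:ℝ)+b) / (Nat.factorial k))^2 := by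
      field_simp
    symm
    calc Bent a b c j k * pseq a b c k
        = (Real.Gamma ((j:ℝ)+(k:ℝ)+a) / Real.Gamma ((j:ℝ)+(k:ℝ)+b+c)) *
            (Real.sqrt (Real.Gamma ((j:ℝ)+b) * Real.Gamma ((j:ℝ)+c) *
              Real.Gamma ((k:ℝ)+b) * Real.Gamma ((k:ℝ)+c) /
              (Real.Gamma ((j:ℝ)+a) * (Nat.factorial j) *
                Real.Gamma ((k:ℝ)+a) * (Nat.factorial k))) *
            Real.sqrt (Real.Gamma ((k:ℝ)+a) * Real.Gamma ((k:ℝ)+b) /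
              (Real.Gamma ((k:ℝ)+c) * (Nat.factorial k)))) := by
          unfold Bent pseq
          push_cast
          ring
      _ = (Real.Gamma ((j:ℝ)+(k:ℝ)+a) / Real.Gamma ((j:ℝ)+(k:ℝ)+b+c)) *
            (w * (Real.Gamma ((k:ℝ)+b) / (Nat.factorial k))) := by
          rw [← Real.sqrt_mul hSnn, hST, Real.sqrt_mul hUnn, Real.sqrt_sq (by positivity),
            hwdef]
      _ = w * (Real.Gamma ((j:ℝ)+(k:ℝ)+a) * Real.Gamma ((k:ℝ)+b) /
            (Real.Gamma ((j:ℝ)+(k:ℝ)+b+c) * (Nat.factorial k))) := by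
          ring
  have hval : w * (Real.Gamma ((j:ℝ)+a) * Real.Gamma b * Real.Gamma (c-a) /
      (Real.Gamma (b+c-a) * Real.Gamma ((j:ℝ)+c)))
      = Cval a b c * pseq a b c j := by
    have key : w * (Real.Gamma ((j:ℝ)+a) / Real.Gamma ((j:ℝ)+c)) = pseq a b c j := by
      rw [hwdef, show Real.Gamma ((j:ℝ)+a) / Real.Gamma ((j:ℝ)+c)
          = Real.sqrt ((Real.Gamma ((j:ℝ)+a) / Real.Gamma ((j:ℝ)+c))^2) from
          (Real.sqrt_sq (by positivity)).symm,
        ← Real.sqrt_mul hUnn]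
      unfold pseq
      congr 1
      field_simp
    rw [← key]
    unfold Cval
    ring
  rw [hfun, hval] at h'
  exact h'

lemma pseq_sq_summable (hb : 0 < b) (hbc : b < c) (ha : 0 < a) (hac : a < c - b) :
    Summable (fun j => pseq a b c j ^ 2) := by
  have h := gauss_hasSum (x := a) (β := b) (y := c) ha hb (by linarith)
  refine h.summable.congr fun j => ?_
  have h0 := cast_nn j
  have hc : 0 < c := by linarith
  have g1 := Real.Gamma_pos_of_pos (show (0:ℝ) < (j:ℝ)+a by linarith)
  have g2 := Real.Gamma_pos_of_pos (show (0:ℝ) < (j:ℝ)+b by linarith)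
  have g3 := Real.Gamma_pos_of_pos (show (0:ℝ) < (j:ℝ)+c by linarith)
  have g4 : (0:ℝ) < (Nat.factorial j : ℝ) := by positivity
  unfold pseq
  rw [Real.sq_sqrt (by positivity)]


lemma rowE (hb : 0 < b) (hbc : b < c) (ha : 0 < a) (hac : a < c - b) (j : ℕ) :
    ∑' k, ENNReal.ofReal (Bent a b c j k) * ENNReal.ofReal (pseq a b c k)
      = ENNReal.ofReal (Cval a b c) * ENNReal.ofReal (pseq a b c j) := by
  have hc : 0 < c := by linarith
  have hr := row_hasSum hb hbc ha hac j
  calc ∑' k, ENNReal.ofReal (Bent a b c j k) * ENNReal.ofReal (pseq a b c k)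
      = ∑' k, ENNReal.ofReal (Bent a b c j k * pseq a b c k) := by
        refine tsum_congr fun k => ?_
        rw [ENNReal.ofReal_mul (Bent_pos ha hb hc j k).le]
    _ = ENNReal.ofReal (Cval a b c * pseq a b c j) := by
        rw [← ENNReal.ofReal_tsum_of_nonneg
          (fun k => mul_nonneg (Bent_pos ha hb hc j k).le (pseq_pos ha hb hc k).le)
          hr.summable, hr.tsum_eq]
    _ = ENNReal.ofReal (Cval a b c) * ENNReal.ofReal (pseq a b c j) :=
        ENNReal.ofReal_mul (Cval_pos hb hbc ha hac).le

lemma colE (hb : 0 < b) (hbc : b < c) (ha : 0 < a) (hac : a < c - b) (k : ℕ) :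
    ∑' j, ENNReal.ofReal (Bent a b c j k) * ENNReal.ofReal (pseq a b c j)
      = ENNReal.ofReal (Cval a b c) * ENNReal.ofReal (pseq a b c k) := by
  have e : ∀ j : ℕ, Bent a b c j k = Bent a b c k j := fun j => Bent_symm j k
  simp_rw [e]
  exact rowE hb hbc ha hac k

lemma coordE (hb : 0 < b) (hbc : b < c) (ha : 0 < a) (hac : a < c - b)
    (x : ℕ → ℂ) (S : ℂ) (j : ℕ)
    (hS : HasSum (fun k => x k * (Bent a b c j k : ℂ)) S) :
    ENNReal.ofReal ‖S‖
      ≤ ∑' k, ENNReal.ofReal (Bent a b c j k) * ENNReal.ofReal ‖x k‖ := by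
  have hc : 0 < c := by linarith
  by_cases htop : (∑' k, ENNReal.ofReal (Bent a b c j k) * ENNReal.ofReal ‖x k‖) = ⊤
  · exact htop ▸ le_top
  · have hsum : Summable (fun k => Bent a b c j k * ‖x k‖) := by
      have h1 := ENNReal.summable_toReal htop
      refine h1.congr fun k => ?_
      rw [← ENNReal.ofReal_mul (Bent_pos ha hb hc j k).le,
        ENNReal.toReal_ofReal (mul_nonneg (Bent_pos ha hb hc j k).le (norm_nonneg _))]
    have hnorm : ∀ k : ℕ, ‖x k * (Bent a b c j k : ℂ)‖ = Bent a b c j k * ‖x k‖ := by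
      intro k
      rw [norm_mul, Complex.norm_real, Real.norm_eq_abs, abs_of_pos (Bent_pos ha hb hc j k)]
      ring
    have h2 : ‖S‖ ≤ ∑' k, Bent a b c j k * ‖x k‖ := by
      have h3 := norm_tsum_le_tsum_norm (f := fun k => x k * (Bent a b c j k : ℂ))
        (by refine hsum.congr fun k => ?_; rw [hnorm k])
      rw [hS.tsum_eq] at h3
      calc ‖S‖ ≤ ∑' k, ‖x k * (Bent a b c j k : ℂ)‖ := h3
        _ = ∑' k, Bent a b c j k * ‖x k‖ := tsum_congr hnorm
    calc ENNReal.ofReal ‖S‖ ≤ ENNReal.ofReal (∑' k, Bent a b c j k * ‖x k‖) :=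
          ENNReal.ofReal_le_ofReal h2
      _ = ∑' k, ENNReal.ofReal (Bent a b c j k * ‖x k‖) :=
          ENNReal.ofReal_tsum_of_nonneg
            (fun k => mul_nonneg (Bent_pos ha hb hc j k).le (norm_nonneg _)) hsum
      _ = ∑' k, ENNReal.ofReal (Bent a b c j k) * ENNReal.ofReal ‖x k‖ :=
          tsum_congr fun k => ENNReal.ofReal_mul (Bent_pos ha hb hc j k).le

lemma schur (hb : 0 < b) (hbc : b < c) (ha : 0 < a) (hac : a < c - b)
    (x : ℕ → ℂ) (S : ℕ → ℂ)
    (hS : ∀ j, HasSum (fun k => x k * (Bent a b c j k : ℂ)) (S j)) :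
    ∑' j, ENNReal.ofReal ‖S j‖ ^ (2:ℝ)
      ≤ ENNReal.ofReal (Cval a b c) ^ (2:ℝ) * ∑' k, ENNReal.ofReal ‖x k‖ ^ (2:ℝ) := by
  have hc : 0 < c := by linarith
  set 𝕔 : ℝ≥0∞ := ENNReal.ofReal (Cval a b c) with h𝕔
  set ℙ : ℕ → ℝ≥0∞ := fun j => ENNReal.ofReal (pseq a b c j) with hℙ
  set 𝔹 : ℕ → ℕ → ℝ≥0∞ := fun j k => ENNReal.ofReal (Bent a b c j k) with h𝔹
  set X : ℕ → ℝ≥0∞ := fun k => ENNReal.ofReal ‖x k‖ with hX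
  have hℙ0 : ∀ j, ℙ j ≠ 0 := fun j => (ENNReal.ofReal_pos.mpr (pseq_pos ha hb hc j)).ne'
  have hℙt : ∀ j, ℙ j ≠ ⊤ := fun j => ENNReal.ofReal_ne_top
  have hrowE : ∀ j, ∑' k, 𝔹 j k * ℙ k = 𝕔 * ℙ j := rowE hb hbc ha hac
  have hcolE : ∀ k, ∑' j, 𝔹 j k * ℙ j = 𝕔 * ℙ k := colE hb hbc ha hac
  set T : ℕ → ℝ≥0∞ := fun j => ∑' k, 𝔹 j k * ℙ j / ℙ k * X k ^ (2:ℝ) with hT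
  have hCS : ∀ j, ENNReal.ofReal ‖S j‖ ^ (2:ℝ) ≤ 𝕔 * T j := by
    intro j
    have h1 : ENNReal.ofReal ‖S j‖ ≤ ∑' k, 𝔹 j k * X k :=
      coordE hb hbc ha hac x (S j) j (hS j)
    have h2 : ∑' k, 𝔹 j k * X k ≤ 𝕔 ^ (1/2:ℝ) * (T j) ^ (1/2:ℝ) := by
      have hcs := ennreal_cauchy_schwarz (fun k => (𝔹 j k * ℙ k / ℙ j) ^ (1/2:ℝ))
        (fun k => (𝔹 j k * ℙ j / ℙ k) ^ (1/2:ℝ) * X k)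
      have e0 : ∀ k : ℕ, (𝔹 j k * ℙ k / ℙ j) ^ (1/2:ℝ) *
          ((𝔹 j k * ℙ j / ℙ k) ^ (1/2:ℝ) * X k) = 𝔹 j k * X k := by
        intro k
        rw [← mul_assoc, ← ENNReal.mul_rpow_of_nonneg _ _ (by norm_num : (0:ℝ) ≤ 1/2)]
        have e : (𝔹 j k * ℙ k / ℙ j) * (𝔹 j k * ℙ j / ℙ k) = 𝔹 j k * 𝔹 j k := by
          calc (𝔹 j k * ℙ k / ℙ j) * (𝔹 j k * ℙ j / ℙ k)
              = (𝔹 j k * 𝔹 j k) * (ℙ k * (ℙ k)⁻¹) * (ℙ j * (ℙ j)⁻¹) := by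
                simp only [div_eq_mul_inv]; ring
            _ = 𝔹 j k * 𝔹 j k := by
                rw [ENNReal.mul_inv_cancel (hℙ0 k) (hℙt k),
                  ENNReal.mul_inv_cancel (hℙ0 j) (hℙt j), mul_one, mul_one]
        rw [e, show (𝔹 j k * 𝔹 j k) = 𝔹 j k ^ (2:ℝ) from by
          rw [show (2:ℝ) = ((2:ℕ):ℝ) by norm_num, ENNReal.rpow_natCast, pow_two],
          ← ENNReal.rpow_mul]
        norm_num
      have e1 : ∑' k, ((𝔹 j k * ℙ k / ℙ j) ^ (1/2:ℝ)) ^ (2:ℝ) = 𝕔 := by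
        have e : ∀ k : ℕ, ((𝔹 j k * ℙ k / ℙ j) ^ (1/2:ℝ)) ^ (2:ℝ)
            = 𝔹 j k * ℙ k * (ℙ j)⁻¹ := by
          intro k
          rw [← ENNReal.rpow_mul]
          norm_num
          rw [div_eq_mul_inv]
        rw [tsum_congr e, ENNReal.tsum_mul_right, hrowE j, mul_assoc,
          ENNReal.mul_inv_cancel (hℙ0 j) (hℙt j), mul_one]
      have e2 : ∑' k, ((𝔹 j k * ℙ j / ℙ k) ^ (1/2:ℝ) * X k) ^ (2:ℝ) = T j := by
        refine tsum_congr fun k => ?_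
        rw [ENNReal.mul_rpow_of_nonneg _ _ (by norm_num : (0:ℝ) ≤ 2), ← ENNReal.rpow_mul]
        norm_num
      rw [tsum_congr e0, e1, e2] at hcs
      exact hcs
    calc ENNReal.ofReal ‖S j‖ ^ (2:ℝ) ≤ (𝕔 ^ (1/2:ℝ) * (T j) ^ (1/2:ℝ)) ^ (2:ℝ) :=
          ENNReal.rpow_le_rpow (h1.trans h2) (by norm_num)
      _ = 𝕔 * T j := by
          rw [ENNReal.mul_rpow_of_nonneg _ _ (by norm_num : (0:ℝ) ≤ 2),
            ← ENNReal.rpow_mul, ← ENNReal.rpow_mul]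
          norm_num
  calc ∑' j, ENNReal.ofReal ‖S j‖ ^ (2:ℝ)
      ≤ ∑' j, 𝕔 * T j := ENNReal.tsum_le_tsum hCS
    _ = 𝕔 * ∑' j, ∑' k, 𝔹 j k * ℙ j / ℙ k * X k ^ (2:ℝ) := ENNReal.tsum_mul_left
    _ = 𝕔 * ∑' k, ∑' j, 𝔹 j k * ℙ j / ℙ k * X k ^ (2:ℝ) := by rw [ENNReal.tsum_comm]
    _ = 𝕔 * ∑' k, 𝕔 * X k ^ (2:ℝ) := by
        congr 1
        refine tsum_congr fun k => ?_
        have e : ∀ j : ℕ, 𝔹 j k * ℙ j / ℙ k * X k ^ (2:ℝ)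
            = (𝔹 j k * ℙ j) * ((ℙ k)⁻¹ * X k ^ (2:ℝ)) := by
          intro j
          rw [div_eq_mul_inv]
          ring
        rw [tsum_congr e, ENNReal.tsum_mul_right, hcolE k]
        calc 𝕔 * ℙ k * ((ℙ k)⁻¹ * X k ^ (2:ℝ))
            = 𝕔 * (ℙ k * (ℙ k)⁻¹) * X k ^ (2:ℝ) := by ring
          _ = 𝕔 * X k ^ (2:ℝ) := by
              rw [ENNReal.mul_inv_cancel (hℙ0 k) (hℙt k), mul_one]
    _ = 𝕔 ^ (2:ℝ) * ∑' k, X k ^ (2:ℝ) := by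
        rw [ENNReal.tsum_mul_left, ← mul_assoc]
        congr 1
        rw [show (2:ℝ) = ((2:ℕ):ℝ) by norm_num, ENNReal.rpow_natCast, pow_two]

end Operator

/-- If `0 < b < c` and `0 < a < c − b`, the norm of `B(a,b,c)` equals
`Γ(b)Γ(c−a)/Γ(b+c−a)`. -/
theorem norm_eq_discrete_top (a b c : ℝ)
    (hb : 0 < b) (hbc : b < c) (ha : 0 < a) (hac : a < c - b)
    (Bop : l2 →L[ℂ] l2) (hrep : Represents a b c Bop) :
    ‖Bop‖ = Real.Gamma b * Real.Gamma (c - a) / Real.Gamma (b + c - a) := by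
  classical
  have hc : 0 < c := by linarith
  have hCpos : 0 < Cval a b c := Cval_pos hb hbc ha hac
  have hppos : ∀ j, 0 < pseq a b c j := pseq_pos ha hb hc
  have hBpos : ∀ j k, 0 < Bent a b c j k := Bent_pos ha hb hc
  -- coordinates of `Bop x`
  have coord : ∀ (x : l2) (j : ℕ),
      HasSum (fun k => x k * (Bent a b c j k : ℂ)) ((Bop x) j) := by
    intro x j
    have h1 : HasSum (fun k => Bop (lp.single 2 k (x k))) (Bop x) :=
      (lp.hasSum_single (by norm_num) x).mapL Bop
    have h2 := h1.mapL (innerSL ℂ (lp.single 2 j (1 : ℂ)))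
    have e1 : (fun k : ℕ => (innerSL ℂ (lp.single 2 j (1:ℂ))) (Bop (lp.single 2 k (x k))))
        = fun k => x k * (Bent a b c j k : ℂ) := by
      funext k
      have hs : lp.single (E := fun _ : ℕ => ℂ) 2 k (x k) = x k • lp.single 2 k (1:ℂ) := by
        rw [← lp.single_smul]; simp
      rw [hs, Bop.map_smul, innerSL_apply_apply, inner_smul_right, hrep j k]
    have e2 : (innerSL ℂ (lp.single 2 j (1:ℂ))) (Bop x) = (Bop x) j := by
      rw [innerSL_apply_apply, lp.inner_single_left]
      simp
    rw [e1, e2] at h2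
    exact h2
  -- the eigenvector
  have hPmem : Memℓp (fun j => ((pseq a b c j : ℝ) : ℂ)) 2 := by
    apply memℓp_gen
    have hs := pseq_sq_summable hb hbc ha hac
    refine hs.congr fun j => ?_
    rw [show ((2:ℝ≥0∞)).toReal = ((2:ℕ):ℝ) by norm_num, Real.rpow_natCast]
    simp [Complex.norm_real, abs_of_pos (hppos j)]
  set P : l2 := ⟨fun j => ((pseq a b c j : ℝ) : ℂ), hPmem⟩ with hPdef
  have hPapp : ∀ j, P j = (pseq a b c j : ℂ) := fun j => rfl
  have hBP : Bop P = ((Cval a b c : ℝ) : ℂ) • P := by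
    ext j
    have h1 := coord P j
    have h2 : HasSum (fun k => P k * (Bent a b c j k : ℂ))
        (((Cval a b c * pseq a b c j : ℝ) : ℂ)) := by
      have h3 := (row_hasSum hb hbc ha hac j).mapL Complex.ofRealCLM
      have e3 : (fun k : ℕ => Complex.ofRealCLM (Bent a b c j k * pseq a b c k))
          = fun k => P k * (Bent a b c j k : ℂ) := by
        funext k
        rw [hPapp k, Complex.ofRealCLM_apply]
        push_cast
        ring
      rw [e3] at h3
      exact h3
    have h4 := h1.unique h2
    rw [h4]
    simp only [lp.coeFn_smul, Pi.smul_apply, hPapp, smul_eq_mul]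
    push_cast
    ring
  have hPne : P ≠ 0 := by
    intro h0
    have h1 : P 0 = (0 : l2) 0 := by rw [h0]
    rw [hPapp 0] at h1
    simp at h1
    exact (hppos 0).ne' h1
  have hPpos : 0 < ‖P‖ := by
    simpa [norm_pos_iff] using hPne
  have hlower : Cval a b c ≤ ‖Bop‖ := by
    have h1 : ‖Bop P‖ = Cval a b c * ‖P‖ := by
      rw [hBP, norm_smul]
      simp [Complex.norm_real, abs_of_pos hCpos]
    have h2 := Bop.le_opNorm P
    rw [h1] at h2
    exact le_of_mul_le_mul_right h2 hPpos
  have hupper : ‖Bop‖ ≤ Cval a b c := by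
    refine Bop.opNorm_le_bound hCpos.le fun x => ?_
    have key := schur hb hbc ha hac (fun k => x k) (fun j => (Bop x) j) (coord x)
    have hsumS : Summable (fun j => ‖(Bop x) j‖ ^ (2:ℝ)) := by
      have := (lp.memℓp (Bop x)).summable (p := 2) (by norm_num)
      simpa using this
    have hsumX : Summable (fun k => ‖x k‖ ^ (2:ℝ)) := by
      have := (lp.memℓp x).summable (p := 2) (by norm_num)
      simpa using this
    have eL : ENNReal.ofReal (‖Bop x‖ ^ (2:ℝ)) = ∑' j, ENNReal.ofReal ‖(Bop x) j‖ ^ (2:ℝ) := by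
      rw [show (‖Bop x‖ ^ (2:ℝ)) = ∑' j, ‖(Bop x) j‖ ^ (2:ℝ) from by
          have := lp.norm_rpow_eq_tsum (p := 2) (by norm_num) (Bop x)
          simpa using this,
        ENNReal.ofReal_tsum_of_nonneg (fun j => Real.rpow_nonneg (norm_nonneg _) _) hsumS]
      exact tsum_congr fun j => (ENNReal.ofReal_rpow_of_nonneg (norm_nonneg _) (by norm_num : (0:ℝ) ≤ 2)).symm
    have eR : ∑' k, ENNReal.ofReal ‖x k‖ ^ (2:ℝ) = ENNReal.ofReal (‖x‖ ^ (2:ℝ)) := by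
      rw [show (‖x‖ ^ (2:ℝ)) = ∑' k, ‖x k‖ ^ (2:ℝ) from by
          have := lp.norm_rpow_eq_tsum (p := 2) (by norm_num) x
          simpa using this,
        ENNReal.ofReal_tsum_of_nonneg (fun k => Real.rpow_nonneg (norm_nonneg _) _) hsumX]
      exact (tsum_congr fun k => ENNReal.ofReal_rpow_of_nonneg (norm_nonneg _) (by norm_num : (0:ℝ) ≤ 2))
    have key2 : ENNReal.ofReal (‖Bop x‖ ^ (2:ℝ))
        ≤ ENNReal.ofReal ((Cval a b c * ‖x‖) ^ (2:ℝ)) := by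
      rw [eL]
      refine key.trans (le_of_eq ?_)
      rw [eR, ENNReal.ofReal_rpow_of_nonneg hCpos.le (by norm_num : (0:ℝ) ≤ 2),
        ← ENNReal.ofReal_mul (Real.rpow_nonneg hCpos.le _),
        ← Real.mul_rpow hCpos.le (norm_nonneg x)]
    have key3 : ‖Bop x‖ ^ (2:ℝ) ≤ (Cval a b c * ‖x‖) ^ (2:ℝ) := by
      have hnn : (0:ℝ) ≤ (Cval a b c * ‖x‖) ^ (2:ℝ) :=
        Real.rpow_nonneg (by positivity) _
      exact (ENNReal.ofReal_le_ofReal_iff hnn).mp key2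
    have h2 : ‖Bop x‖ ^ (2:ℕ) ≤ (Cval a b c * ‖x‖) ^ (2:ℕ) := by
      rw [← Real.rpow_natCast ‖Bop x‖ 2, ← Real.rpow_natCast (Cval a b c * ‖x‖) 2,
        show ((2:ℕ):ℝ) = (2:ℝ) by norm_num]
      exact key3
    exact le_of_pow_le_pow_left₀ two_ne_zero (by positivity) h2
  have : ‖Bop‖ = Cval a b c := le_antisymm hupper hlower
  rw [this]
  rfl
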